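/- Under the same hypotheses as the 2D linearized system with σ₀ ≡ 1 (2∂v_1/∂x_1 + ρ = g_{1,1}, 2∂v_2/∂x_2 + ρ = g_{2,2}, ∂v_1/∂x_2 + ∂v_2/∂x_1 = g_{1,2}, Δv_j = -∂ρ/∂x_j), the first partial derivatives of ρ are determined explicitly: ∂ρ/∂x_1 = ½ ∂(g_{2,2}-g_{1,1})/∂x_1 - ∂g_{1,2}/∂x_2 and ∂ρ/∂x_2 = ½ ∂(g_{1,1}-g_{2,2})/∂x_2 - ∂g_{1,2}/∂x_1. -/

import Mathlib

noncomputable section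

def pd {n : ℕ} (i : Fin n) (f : EuclideanSpace ℝ (Fin n) → ℝ)
    (x : EuclideanSpace ℝ (Fin n)) : ℝ :=
  fderiv ℝ f x (EuclideanSpace.single i 1)

section aux

variable {Ω : Set (EuclideanSpace ℝ (Fin 2))} {x : EuclideanSpace ℝ (Fin 2)}
  {f g : EuclideanSpace ℝ (Fin 2) → ℝ}

lemma pd_congr (i : Fin 2) (h : f =ᶠ[nhds x] g) : pd i f x = pd i g x := by
  simp only [pd, h.fderiv_eq]

lemma diffAt_pd (hΩ : IsOpen Ω) (hx : x ∈ Ω) (hf : ContDiffOn ℝ 3 f Ω) (i : Fin 2) :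
    DifferentiableAt ℝ (pd i f) x := by
  have hdf : ContDiffOn ℝ 2 (fderiv ℝ f) Ω := hf.fderiv_of_isOpen hΩ (by norm_num)
  have h1 : DifferentiableAt ℝ (fderiv ℝ f) x :=
    (hdf.differentiableOn (by norm_num)).differentiableAt (hΩ.mem_nhds hx)
  exact h1.clm_apply (differentiableAt_const _)

lemma pd_comm (hΩ : IsOpen Ω) (hx : x ∈ Ω) (hf : ContDiffOn ℝ 3 f Ω) (i j : Fin 2) :
    pd i (pd j f) x = pd j (pd i f) x := by
  have hdf : ContDiffOn ℝ 2 (fderiv ℝ f) Ω := hf.fderiv_of_isOpen hΩ (by norm_num)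
  have h1 : DifferentiableAt ℝ (fderiv ℝ f) x :=
    (hdf.differentiableOn (by norm_num)).differentiableAt (hΩ.mem_nhds hx)
  have heval : ∀ i j : Fin 2, pd i (pd j f) x =
      fderiv ℝ (fderiv ℝ f) x (EuclideanSpace.single i 1) (EuclideanSpace.single j 1) := by
    intro i j
    have : pd j f = fun y => fderiv ℝ f y (EuclideanSpace.single j 1) := rfl
    simp only [pd, this, fderiv_clm_apply h1 (differentiableAt_const _)]
    simp
  rw [heval, heval]
  apply second_derivative_symmetric_of_eventually (f := f)
  · filter_upwards [hΩ.mem_nhds hx] with y hy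
    exact ((hf.differentiableOn (by norm_num)).differentiableAt (hΩ.mem_nhds hy)).hasFDerivAt
  · exact h1.hasFDerivAt

lemma pd_sub (i : Fin 2) (hf : DifferentiableAt ℝ f x) (hg : DifferentiableAt ℝ g x) :
    pd i (fun y => f y - g y) x = pd i f x - pd i g x := by
  simp only [pd, fderiv_fun_sub hf hg]; rfl

lemma pd_add (i : Fin 2) (hf : DifferentiableAt ℝ f x) (hg : DifferentiableAt ℝ g x) :
    pd i (fun y => f y + g y) x = pd i f x + pd i g x := by
  simp only [pd, fderiv_fun_add hf hg]; rfl

lemma pd_const_mul (i : Fin 2) (c : ℝ) (hf : DifferentiableAt ℝ f x) :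
    pd i (fun y => c * f y) x = c * pd i f x := by
  simp only [pd, fderiv_const_mul hf]; rfl

end aux

/-- Under the hypotheses of the 2D linearized system with `σ₀ ≡ 1`, the first partial
derivatives of `ρ` are determined explicitly:
`∂ρ/∂x_1 = ½ ∂(g_{2,2}-g_{1,1})/∂x_1 - ∂g_{1,2}/∂x_2` and
`∂ρ/∂x_2 = ½ ∂(g_{1,1}-g_{2,2})/∂x_2 - ∂g_{1,2}/∂x_1`. -/
theorem stmt5 (Ω : Set (EuclideanSpace ℝ (Fin 2))) (hΩ : IsOpen Ω)
    (v₁ v₂ ρ g₁₁ g₂₂ g₁₂ : EuclideanSpace ℝ (Fin 2) → ℝ)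
    (hv₁ : ContDiffOn ℝ 3 v₁ Ω) (hv₂ : ContDiffOn ℝ 3 v₂ Ω) (hρ : ContDiffOn ℝ 3 ρ Ω)
    (hg₁₁ : ContDiffOn ℝ 1 g₁₁ Ω) (hg₂₂ : ContDiffOn ℝ 1 g₂₂ Ω) (hg₁₂ : ContDiffOn ℝ 1 g₁₂ Ω)
    (h1 : ∀ x ∈ Ω, 2 * pd 0 v₁ x + ρ x = g₁₁ x)
    (h2 : ∀ x ∈ Ω, 2 * pd 1 v₂ x + ρ x = g₂₂ x)
    (h3 : ∀ x ∈ Ω, pd 1 v₁ x + pd 0 v₂ x = g₁₂ x)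
    (h4 : ∀ x ∈ Ω, pd 0 (pd 0 v₁) x + pd 1 (pd 1 v₁) x = - pd 0 ρ x)
    (h5 : ∀ x ∈ Ω, pd 0 (pd 0 v₂) x + pd 1 (pd 1 v₂) x = - pd 1 ρ x) :
    ∀ x ∈ Ω,
      pd 0 ρ x = (1/2) * pd 0 (fun y => g₂₂ y - g₁₁ y) x - pd 1 g₁₂ x ∧
      pd 1 ρ x = (1/2) * pd 1 (fun y => g₁₁ y - g₂₂ y) x - pd 0 g₁₂ x := by
  intro x hx
  have hmem : Ω ∈ nhds x := hΩ.mem_nhds hx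
  have dv₁ := fun i => diffAt_pd hΩ hx hv₁ i
  have dv₂ := fun i => diffAt_pd hΩ hx hv₂ i
  have dmul : ∀ (f : EuclideanSpace ℝ (Fin 2) → ℝ), DifferentiableAt ℝ f x →
      DifferentiableAt ℝ (fun y => 2 * f y) x := fun f hf => hf.const_mul 2
  -- g₂₂ - g₁₁ = 2 pd1 v₂ - 2 pd0 v₁ near x
  have e1 : (fun y => g₂₂ y - g₁₁ y) =ᶠ[nhds x]
      (fun y => (2 * pd 1 v₂ y) - (2 * pd 0 v₁ y)) := by
    filter_upwards [hmem] with y hy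
    rw [← h1 y hy, ← h2 y hy]; ring
  have e2 : (fun y => g₁₁ y - g₂₂ y) =ᶠ[nhds x]
      (fun y => (2 * pd 0 v₁ y) - (2 * pd 1 v₂ y)) := by
    filter_upwards [hmem] with y hy
    rw [← h1 y hy, ← h2 y hy]; ring
  have e3 : g₁₂ =ᶠ[nhds x] (fun y => pd 1 v₁ y + pd 0 v₂ y) := by
    filter_upwards [hmem] with y hy
    rw [← h3 y hy]
  have E1 : pd 0 (fun y => g₂₂ y - g₁₁ y) x
      = 2 * pd 0 (pd 1 v₂) x - 2 * pd 0 (pd 0 v₁) x := by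
    rw [pd_congr 0 e1, pd_sub 0 (dmul _ (dv₂ 1)) (dmul _ (dv₁ 0)),
      pd_const_mul 0 2 (dv₂ 1), pd_const_mul 0 2 (dv₁ 0)]
  have E2 : pd 1 (fun y => g₁₁ y - g₂₂ y) x
      = 2 * pd 1 (pd 0 v₁) x - 2 * pd 1 (pd 1 v₂) x := by
    rw [pd_congr 1 e2, pd_sub 1 (dmul _ (dv₁ 0)) (dmul _ (dv₂ 1)),
      pd_const_mul 1 2 (dv₁ 0), pd_const_mul 1 2 (dv₂ 1)]
  have E3 : pd 1 g₁₂ x = pd 1 (pd 1 v₁) x + pd 1 (pd 0 v₂) x := by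
    rw [pd_congr 1 e3, pd_add 1 (dv₁ 1) (dv₂ 0)]
  have E4 : pd 0 g₁₂ x = pd 0 (pd 1 v₁) x + pd 0 (pd 0 v₂) x := by
    rw [pd_congr 0 e3, pd_add 0 (dv₁ 1) (dv₂ 0)]
  have S1 : pd 0 (pd 1 v₂) x = pd 1 (pd 0 v₂) x := pd_comm hΩ hx hv₂ 0 1
  have S2 : pd 1 (pd 0 v₁) x = pd 0 (pd 1 v₁) x := pd_comm hΩ hx hv₁ 1 0
  have H4 := h4 x hx
  have H5 := h5 x hx
  constructor
  · rw [E1, E3]; linarith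
  · rw [E2, E4]; linarith

end
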